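/- arXiv:1511.05678 — 2 statements merged into one kernel-verified Lean document; each statement's English description precedes it below -/
import Mathlib

section
/- Consider a two-layer rectifier network on ℝ^d with n hidden units, hidden-layer partition P, N of {1,…,n}, pre-activations a_k(x) = u_k · x + b_k and output bias w_0. For every input x ∈ ℝ^d, the network classifies x as positive (i.e. w_0 + Σ_{k∈P} max(0, a_k(x)) − Σ_{k∈N} max(0, a_k(x)) ≥ 0) if and only if for every subset S_2 ⊆ N there exists a subset S_1 ⊆ P such that w_0 + Σ_{k∈S_1} a_k(x) − Σ_{k∈S_2} a_k(x) ≥ 0. -/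
lemma sum_max_eq_filter {n : ℕ} (T : Finset (Fin n)) (f : Fin n → ℝ) :
    ∑ k ∈ T.filter (fun k => 0 ≤ f k), f k = ∑ k ∈ T, max 0 (f k) := by
  rw [Finset.sum_filter]
  refine Finset.sum_congr rfl fun k _ => ?_
  by_cases h : 0 ≤ f k
  · simp [h, max_eq_right h]
  · simp [h, max_eq_left (le_of_not_ge h)]

lemma sum_le_sum_max {n : ℕ} {S T : Finset (Fin n)} (hST : S ⊆ T) (f : Fin n → ℝ) :
    ∑ k ∈ S, f k ≤ ∑ k ∈ T, max 0 (f k) := by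
  calc ∑ k ∈ S, f k ≤ ∑ k ∈ S, max 0 (f k) :=
        Finset.sum_le_sum fun k _ => le_max_right _ _
    _ ≤ ∑ k ∈ T, max 0 (f k) :=
        Finset.sum_le_sum_of_subset_of_nonneg hST fun k _ _ => le_max_left _ _

/-- A two-layer rectifier network classifies `x` as positive iff
for every `S₂ ⊆ N` there exists `S₁ ⊆ P` such that the corresponding affine
inequality holds. -/
theorem relu_network_positive_iff_forall_exists
    (d n : ℕ) (u : Fin n → Fin d → ℝ) (b : Fin n → ℝ) (w0 : ℝ)
    (P N : Finset (Fin n)) (hdisj : Disjoint P N) (hcover : P ∪ N = Finset.univ)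
    (a : Fin n → (Fin d → ℝ) → ℝ)
    (ha : ∀ k x, a k x = (∑ i, u k i * x i) + b k)
    (x : Fin d → ℝ) :
    (0 ≤ w0 + ∑ k ∈ P, max 0 (a k x) - ∑ k ∈ N, max 0 (a k x)) ↔
    (∀ S2 ⊆ N, ∃ S1 ⊆ P,
      0 ≤ w0 + ∑ k ∈ S1, a k x - ∑ k ∈ S2, a k x) := by
  constructor
  · intro h S2 hS2
    refine ⟨P.filter (fun k => 0 ≤ a k x), Finset.filter_subset _ _, ?_⟩
    have hp := sum_max_eq_filter P (fun k => a k x)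
    have := sum_le_sum_max hS2 (fun k => a k x)
    linarith
  · intro h
    obtain ⟨S1, hS1, hineq⟩ := h (N.filter (fun k => 0 ≤ a k x)) (Finset.filter_subset _ _)
    have h1 : ∑ k ∈ N.filter (fun k => 0 ≤ a k x), a k x = ∑ k ∈ N, max 0 (a k x) :=
      sum_max_eq_filter N (fun k => a k x)
    have h2 := sum_le_sum_max hS1 (fun k => a k x)
    linarith
end

section
/- Fix integers n > 1 and d ≥ n, and define F : ℝ^d → {±1} by F(x) = sgn(−1 + Σ_{i=1}^n max(0, x_i)), where x_i denotes the i-th coordinate of x. Then F cannot be computed by any two-layer threshold network with at most 2^n − 2 hidden units: there do NOT exist m ≤ 2^n − 2, weight vectors v_j ∈ ℝ^d, biases d_j ∈ ℝ, output weights w_j ∈ ℝ (j = 1,…,m) and an output bias w_0' ∈ ℝ such that F(x) = sgn(w_0' + Σ_{j=1}^m w_j sgn(v_j · x + d_j)) for all x ∈ ℝ^d. -/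
noncomputable def sgn (x : ℝ) : ℝ := if 0 ≤ x then 1 else -1

lemma sgn_stable {a b : ℝ} (h : |b| < |a|) : sgn (a + b) = sgn a := by
  have ha : a ≠ 0 := by rintro rfl; simp at h; exact (abs_nonneg b).not_gt h
  unfold sgn
  rcases ha.lt_or_gt with h1 | h1
  · rw [if_neg (by rw [abs_of_neg h1] at h; have := abs_lt.1 h; linarith), if_neg h1.not_ge]
  · rw [if_pos (by rw [abs_of_pos h1] at h; have := abs_lt.1 h; linarith), if_pos h1.le]

lemma sgn_of_nonneg {x : ℝ} (h : 0 ≤ x) : sgn x = 1 := by unfold sgn; exact if_pos h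

lemma sgn_of_neg {x : ℝ} (h : x < 0) : sgn x = -1 := by unfold sgn; exact if_neg (not_le.2 h)

open MeasureTheory in
lemma null_hyperplane {d : ℕ} (a : Fin d → ℝ) (ha : a ≠ 0) (c : ℝ) :
    volume {y : Fin d → ℝ | ∑ i, a i * y i = c} = 0 := by
  obtain ⟨i₁, hi₁⟩ : ∃ i, a i ≠ 0 := by
    by_contra h; push_neg at h; exact ha (funext h)
  set f : (Fin d → ℝ) →ₗ[ℝ] ℝ :=
    { toFun := fun y => ∑ i, a i * y i
      map_add' := fun y z => by simp [mul_add, Finset.sum_add_distrib]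
      map_smul' := fun r y => by
        simp only [smul_eq_mul, RingHom.id_apply, Finset.mul_sum, Pi.smul_apply]
        exact Finset.sum_congr rfl fun i _ => by ring }
  set y₀ : Fin d → ℝ := Pi.single i₁ (c / a i₁) with hy₀
  have hf0 : f y₀ = c := by
    simp only [f, LinearMap.coe_mk, AddHom.coe_mk, y₀]
    rw [Finset.sum_eq_single i₁]
    · rw [Pi.single_eq_same]; field_simp
    · intro b _ hb; simp [Pi.single_apply, hb]
    · simp
  have hset : {y : Fin d → ℝ | ∑ i, a i * y i = c}
      = (fun y => y + (-y₀)) ⁻¹' (LinearMap.ker f : Set (Fin d → ℝ)) := by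
    ext y
    simp only [Set.mem_setOf_eq, Set.mem_preimage, SetLike.mem_coe, LinearMap.mem_ker,
      map_add, map_neg, hf0]
    constructor
    · intro h; show f y + -c = 0; rw [show f y = ∑ i, a i * y i from rfl, h]; ring
    · intro h; have : f y = c := by linarith [h]
      simpa [f] using this
  rw [hset, measure_preimage_add_right]
  exact Measure.addHaar_submodule volume _ (by
    intro htop
    have : Pi.single i₁ 1 ∈ LinearMap.ker f := htop ▸ Submodule.mem_top
    rw [LinearMap.mem_ker] at this
    apply hi₁
    simpa [f, Finset.sum_eq_single i₁, Pi.single_apply] using this)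

/-- the rectifier network `x ↦ sgn(-1 + Σ_{i=1}^n max(0, x_i))` on
`ℝ^d` (with `n > 1`, `d ≥ n`) cannot be computed by any two-layer threshold
network with at most `2^n - 2` hidden units. -/
theorem relu_needs_exponential_thresholds
    (n d : ℕ) (hn : 1 < n) (hd : n ≤ d)
    (F : (Fin d → ℝ) → ℝ)
    (hF : ∀ x, F x = sgn (-1 + ∑ i : Fin n, max 0 (x (Fin.castLE hd i)))) :
    ¬ ∃ m ≤ 2 ^ n - 2, ∃ (v : Fin m → Fin d → ℝ) (dd : Fin m → ℝ)
      (w : Fin m → ℝ) (w0' : ℝ),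
      ∀ x : Fin d → ℝ,
        F x = sgn (w0' + ∑ j, w j * sgn ((∑ i, v j i * x i) + dd j)) := by
  rintro ⟨m, hm, v, dd, w, w0', hnet⟩
  have hcast_inj : Function.Injective (Fin.castLE hd) := fun a b hab => by
    ext; simpa using congrArg Fin.val hab
  set emb : Fin n ↪ Fin d := ⟨Fin.castLE hd, hcast_inj⟩ with hembdef
  have hFval : ∀ (S : Finset (Fin n)) (x : Fin d → ℝ),
      (∀ i ∈ S, 0 < x (Fin.castLE hd i)) → (∀ i : Fin n, i ∉ S → x (Fin.castLE hd i) < 0) →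
      F x = sgn (-1 + ∑ i ∈ S, x (Fin.castLE hd i)) := by
    intro S x h1 h2
    rw [hF]
    congr 2
    rw [← Finset.sum_subset (Finset.subset_univ S)
      (fun i _ hi => max_eq_left (h2 i hi).le)]
    exact Finset.sum_congr rfl fun i hi => max_eq_right (h1 i hi).le
  have lemA : ∀ (S : Finset (Fin n)), S.Nonempty → ∀ p : Fin d → ℝ,
      (∀ i ∈ S, 0 < p (Fin.castLE hd i)) → (∀ i : Fin n, i ∉ S → p (Fin.castLE hd i) < 0) →
      (∑ i ∈ S, p (Fin.castLE hd i)) = 1 →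
      ∃ j : Fin m, v j ≠ 0 ∧ (∑ i, v j i * p i) + dd j = 0 := by
    intro S hS p hpos hneg hsum
    by_contra hcon
    push_neg at hcon
    set χ : Fin d → ℝ := fun i => if i ∈ S.map emb then 1 else 0 with hχ
    set A : Fin m → ℝ := fun j => ∑ i, v j i * χ i with hA
    set L : Fin m → ℝ := fun j => (∑ i, v j i * p i) + dd j with hL
    set cc : Fin m → ℝ := fun j => if L j = 0 then 1 else |L j| / (|A j| + 1) with hcc
    set T : Finset ℝ :=
      insert (S.inf' hS fun i => p (Fin.castLE hd i)) (Finset.univ.image cc) with hT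
    have hTne : T.Nonempty := Finset.insert_nonempty _ _
    have hTpos : ∀ r ∈ T, 0 < r := by
      intro r hr
      rcases Finset.mem_insert.1 hr with h | h
      · obtain ⟨i, hi, hie⟩ := Finset.exists_mem_eq_inf' hS fun i => p (Fin.castLE hd i)
        rw [h, hie]; exact hpos i hi
      · obtain ⟨j, _, hj⟩ := Finset.mem_image.1 h
        rw [← hj]
        simp only [hcc]
        split
        · norm_num
        · next h' => positivity
    set ε : ℝ := T.min' hTne / 2 with hε
    have hminpos : 0 < T.min' hTne := hTpos _ (Finset.min'_mem _ hTne)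
    have hεpos : 0 < ε := by positivity
    have hεlt : ∀ i ∈ S, ε < p (Fin.castLE hd i) := by
      intro i hi
      have h1 : T.min' hTne ≤ p (Fin.castLE hd i) :=
        le_trans (Finset.min'_le _ _ (Finset.mem_insert_self _ _))
          (Finset.inf'_le _ hi)
      rw [hε]; linarith
    have hεcc : ∀ j, ε * |A j| < |L j| ∨ L j = 0 := by
      intro j
      rcases eq_or_ne (L j) 0 with h0 | h0
      · exact Or.inr h0
      · left
        have h1 : T.min' hTne ≤ cc j :=
          Finset.min'_le _ _ (Finset.mem_insert_of_mem
            (Finset.mem_image_of_mem cc (Finset.mem_univ j)))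
        have h2 : cc j = |L j| / (|A j| + 1) := if_neg h0
        rw [h2] at h1
        have h3 : 0 < |L j| := abs_pos.2 h0
        have h4 : (0:ℝ) ≤ |A j| := abs_nonneg _
        rw [hε]
        rw [le_div_iff₀ (by linarith)] at h1
        nlinarith
    set q : ℝ → (Fin d → ℝ) := fun t i => p i + t * χ i with hq
    have hχS : ∀ i ∈ S, χ (Fin.castLE hd i) = 1 := by
      intro i hi
      have hmem : Fin.castLE hd i ∈ Finset.map emb S := Finset.mem_map_of_mem emb hi
      simp only [hχ, if_pos hmem]
    have hχnS : ∀ i : Fin n, i ∉ S → χ (Fin.castLE hd i) = 0 := by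
      intro i hi
      have hmem : Fin.castLE hd i ∉ Finset.map emb S := by
        show (emb i : Fin d) ∉ S.map emb
        rw [Finset.mem_map' emb]; exact hi
      simp only [hχ, if_neg hmem]
    have hqF : ∀ t : ℝ, |t| ≤ ε → F (q t) = sgn (t * S.card) := by
      intro t ht
      have habs := abs_le.1 ht
      have h1 : ∀ i ∈ S, 0 < q t (Fin.castLE hd i) := by
        intro i hi
        simp only [hq, hχS i hi, mul_one]
        have := hεlt i hi
        linarith
      have h2 : ∀ i : Fin n, i ∉ S → q t (Fin.castLE hd i) < 0 := by
        intro i hi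
        simp only [hq, hχnS i hi, mul_zero, add_zero]
        exact hneg i hi
      rw [hFval S (q t) h1 h2]
      congr 1
      have : ∑ i ∈ S, q t (Fin.castLE hd i)
          = (∑ i ∈ S, p (Fin.castLE hd i)) + t * S.card := by
        simp only [hq]
        rw [Finset.sum_add_distrib]
        congr 1
        rw [Finset.sum_congr rfl fun i hi => by rw [hχS i hi, mul_one]]
        simp [mul_comm]
      rw [this, hsum]; ring
    have hcard : (0:ℝ) < S.card := by exact_mod_cast hS.card_pos
    have hFp : F (q ε) = 1 := by
      rw [hqF ε (le_of_eq (abs_of_pos hεpos))]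
      exact sgn_of_nonneg (le_of_lt (mul_pos hεpos hcard))
    have hFm : F (q (-ε)) = -1 := by
      rw [hqF (-ε) (le_of_eq (by rw [abs_neg, abs_of_pos hεpos]))]
      have h5 := mul_pos hεpos hcard
      exact sgn_of_neg (by linarith)
    have hLq : ∀ (j) (t : ℝ), (∑ i, v j i * q t i) + dd j = L j + t * A j := by
      intro j t
      simp only [hq, hL, hA]
      have h1 : ∑ i, v j i * (p i + t * χ i) = ∑ i, (v j i * p i + t * (v j i * χ i)) :=
        Finset.sum_congr rfl fun i _ => by ring
      rw [h1, Finset.sum_add_distrib, ← Finset.mul_sum]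
      ring
    have hsg : ∀ j, sgn ((∑ i, v j i * q ε i) + dd j) = sgn ((∑ i, v j i * q (-ε) i) + dd j) := by
      intro j
      rcases eq_or_ne (v j) 0 with h0 | h0
      · have hA0 : A j = 0 := by simp [hA, h0]
        rw [hLq, hLq, hA0]; norm_num
      · have hl := hcon j h0
        rcases hεcc j with hb | hb
        · have hb1 : |ε * A j| < |L j| := by rw [abs_mul, abs_of_pos hεpos]; exact hb
          have hb2 : |(-ε) * A j| < |L j| := by
            rw [abs_mul, abs_neg, abs_of_pos hεpos]; exact hb
          rw [hLq, hLq, sgn_stable (a := L j) (b := ε * A j) hb1,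
            sgn_stable (a := L j) (b := (-ε) * A j) hb2]
        · exact absurd hb hl
    have := hnet (q ε)
    rw [hFp] at this
    have h2 := hnet (q (-ε))
    rw [hFm] at h2
    rw [Finset.sum_congr rfl fun j _ => by rw [hsg j]] at this
    rw [← h2] at this
    norm_num at this
  classical
  -- Lemma B: every nonempty S yields an aligned unit
  have lemB : ∀ S : Finset (Fin n), S.Nonempty →
      ∃ j : Fin m, ∃ c : ℝ, c ≠ 0 ∧
        (∀ i : Fin d, v j i = c * (if i ∈ S.map emb then 1 else 0)) ∧ dd j = -c := by
    intro S hS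
    by_contra hno
    push_neg at hno
    obtain ⟨i₀, hi₀⟩ := hS
    have hS : S.Nonempty := ⟨i₀, hi₀⟩
    set i₀' : Fin d := Fin.castLE hd i₀ with hi₀'
    set E : Finset (Fin n) := S.erase i₀ with hEdef
    have hE_ne : ∀ i ∈ E, Fin.castLE hd i ≠ i₀' := by
      intro i hi h
      exact (Finset.mem_erase.1 hi).1 (hcast_inj h)
    set ψ : (Fin d → ℝ) → (Fin d → ℝ) := fun y i =>
      if i = i₀' then 1 - ∑ i' ∈ E, y (Fin.castLE hd i') else y i with hψ
    have hψE : ∀ (y) (i), i ≠ i₀' → ψ y i = y i := by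
      intro y i hi; simp only [hψ, if_neg hi]
    have hψ0 : ∀ y, ψ y i₀' = 1 - ∑ i' ∈ E, y (Fin.castLE hd i') := by
      intro y; simp only [hψ, if_pos rfl]
    have hψsum : ∀ y, ∑ i ∈ S, ψ y (Fin.castLE hd i) = 1 := by
      intro y
      rw [← Finset.add_sum_erase S _ hi₀, ← hEdef, hψ0 y,
        Finset.sum_congr rfl fun i hi => hψE y _ (hE_ne i hi)]
      ring
    -- the open set of good parameters
    set U : Set (Fin d → ℝ) := {y | (∀ i ∈ S, 0 < ψ y (Fin.castLE hd i)) ∧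
      ∀ i : Fin n, i ∉ S → ψ y (Fin.castLE hd i) < 0} with hU
    have hcont : ∀ c : Fin d, Continuous fun y : Fin d → ℝ => ψ y c := by
      intro c
      by_cases h : c = i₀'
      · simp only [hψ, if_pos h]
        exact continuous_const.sub (continuous_finset_sum _ fun i _ => continuous_apply _)
      · simp only [hψ, if_neg h]
        exact continuous_apply c
    set V : Fin n → Set (Fin d → ℝ) := fun i =>
      if i ∈ S then {y | 0 < ψ y (Fin.castLE hd i)} else {y | ψ y (Fin.castLE hd i) < 0}
      with hV
    have hUopen : IsOpen U := by
      have hVopen : ∀ i, IsOpen (V i) := by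
        intro i
        by_cases hi : i ∈ S
        · simp only [hV, if_pos hi]
          exact isOpen_lt continuous_const (hcont _)
        · simp only [hV, if_neg hi]
          exact isOpen_lt (hcont _) continuous_const
      have hUeq : U = ⋂ i, V i := by
        ext y
        constructor
        · rintro ⟨h1, h2⟩
          refine Set.mem_iInter.2 fun i => ?_
          by_cases hi : i ∈ S
          · simpa only [hV, if_pos hi, Set.mem_setOf_eq] using h1 i hi
          · simpa only [hV, if_neg hi, Set.mem_setOf_eq] using h2 i hi
        · intro h
          have h' := Set.mem_iInter.1 h
          constructor
          · intro i hi; have := h' i; simpa only [hV, if_pos hi, Set.mem_setOf_eq] using this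
          · intro i hi; have := h' i; simpa only [hV, if_neg hi, Set.mem_setOf_eq] using this
      rw [hUeq]
      exact isOpen_iInter_of_finite hVopen
    -- base point
    have hk1 : 1 ≤ S.card := hS.card_pos
    have hkpos : (0:ℝ) < (S.card : ℝ) := by exact_mod_cast hS.card_pos
    set y₀ : Fin d → ℝ := fun i =>
      if h : (i : ℕ) < n then (if (⟨(i:ℕ), h⟩ : Fin n) ∈ S then ((S.card : ℝ))⁻¹ else -1)
      else -1 with hy₀def
    have hy₀ : ∀ i : Fin n, y₀ (Fin.castLE hd i) = if i ∈ S then ((S.card : ℝ))⁻¹ else -1 := by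
      intro i
      have h1 : ((Fin.castLE hd i : Fin d) : ℕ) < n := i.isLt
      have h2 : (⟨((Fin.castLE hd i : Fin d) : ℕ), h1⟩ : Fin n) = i := rfl
      simp only [hy₀def, dif_pos h1, h2]
    have hcardE : ((E.card : ℝ)) = (S.card : ℝ) - 1 := by
      rw [hEdef, Finset.card_erase_of_mem hi₀]
      have := hk1
      push_cast [Nat.cast_sub this]
      ring
    have hψy₀0 : ψ y₀ i₀' = ((S.card : ℝ))⁻¹ := by
      rw [hψ0]
      have hsum : ∑ i' ∈ E, y₀ (Fin.castLE hd i') = (E.card : ℝ) * ((S.card : ℝ))⁻¹ := by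
        rw [Finset.sum_congr rfl fun i hi => by
          rw [hy₀ i, if_pos (Finset.mem_of_mem_erase hi)]]
        simp [mul_comm]
      rw [hsum, hcardE]
      field_simp
      ring
    have hy₀U : y₀ ∈ U := by
      constructor
      · intro i hi
        by_cases h : i = i₀
        · subst h
          rw [hψy₀0]
          positivity
        · rw [hψE _ _ (hE_ne i (Finset.mem_erase.2 ⟨h, hi⟩)), hy₀ i, if_pos hi]
          positivity
      · intro i hi
        have h : i ≠ i₀ := by rintro rfl; exact hi hi₀
        rw [hψE _ _ fun hc => h (hcast_inj hc), hy₀ i, if_neg hi]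
        norm_num
    -- bad sets are null
    set W : Fin m → Set (Fin d → ℝ) :=
      fun j => {y | v j ≠ 0 ∧ (∑ i, v j i * ψ y i) + dd j = 0} with hW
    have hWnull : ∀ j, MeasureTheory.volume (W j) = 0 := by
      intro j
      by_cases h0 : v j = 0
      · have : W j = ∅ := by
          apply Set.eq_empty_iff_forall_notMem.2
          intro y hy
          exact hy.1 h0
        simp [this]
      · set a : Fin d → ℝ := fun i =>
          if i ∈ E.map emb then v j i - v j i₀' else if i = i₀' then 0 else v j i with ha
        have hi₀E : i₀' ∉ E.map emb := by
          intro h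
          obtain ⟨i', hi', he⟩ := Finset.mem_map.1 h
          exact (Finset.mem_erase.1 hi').1 (hcast_inj he)
        have key : ∀ y, (∑ i, v j i * ψ y i) = (∑ i, a i * y i) + v j i₀' := by
          intro y
          set g : Fin d → ℝ := fun i => v j i * ψ y i - a i * y i with hg
          have hg0 : g i₀' = v j i₀' * (1 - ∑ i' ∈ E, y (Fin.castLE hd i')) := by
            have ha0 : a i₀' = 0 := by simp [ha, hi₀E]
            simp only [hg, ha0, hψ0 y]
            ring
          have hgE : ∀ i ∈ E.map emb, g i = v j i₀' * y i := by
            intro i hi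
            obtain ⟨i', hi', rfl⟩ := Finset.mem_map.1 hi
            have hne : (emb i' : Fin d) ≠ i₀' := hE_ne i' hi'
            simp only [hg, ha, if_pos hi, hψE y _ hne]
            ring
          have hgz : ∀ i ∈ Finset.univ.erase i₀', i ∉ E.map emb → g i = 0 := by
            intro i hi hni
            have hne : i ≠ i₀' := (Finset.mem_erase.1 hi).1
            simp only [hg, ha, if_neg hni, if_neg hne, hψE y _ hne]
            ring
          have hsplit : ∑ i, g i = g i₀' + ∑ i ∈ Finset.univ.erase i₀', g i :=
            (Finset.add_sum_erase _ g (Finset.mem_univ i₀')).symm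
          have hsub : E.map emb ⊆ Finset.univ.erase i₀' := by
            intro i hi
            exact Finset.mem_erase.2 ⟨by
              intro h; exact hi₀E (h ▸ hi), Finset.mem_univ i⟩
          have hrest : ∑ i ∈ Finset.univ.erase i₀', g i = ∑ i ∈ E.map emb, g i :=
            (Finset.sum_subset hsub hgz).symm
          have hmap : ∑ i ∈ E.map emb, y i = ∑ i' ∈ E, y (Fin.castLE hd i') :=
            Finset.sum_map E emb fun i => y i
          have hEsum : ∑ i ∈ E.map emb, g i
              = v j i₀' * ∑ i' ∈ E, y (Fin.castLE hd i') := by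
            rw [Finset.sum_congr rfl hgE, ← Finset.mul_sum, hmap]
          have hgsum : ∑ i, g i = v j i₀' := by
            rw [hsplit, hrest, hEsum, hg0]; ring
          have hgdef : ∑ i, g i = (∑ i, v j i * ψ y i) - ∑ i, a i * y i := by
            simp only [hg, Finset.sum_sub_distrib]
          linarith [hgdef ▸ hgsum]
        by_cases haz : a = 0
        · have hfold : ∀ i : Fin d, v j i = (v j i₀') * (if i ∈ S.map emb then 1 else 0) := by
            intro i
            by_cases h1 : i ∈ E.map emb
            · have h2 : i ∈ S.map emb := by
                obtain ⟨i', hi', rfl⟩ := Finset.mem_map.1 h1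
                exact Finset.mem_map_of_mem emb (Finset.mem_of_mem_erase hi')
              have h3 : a i = v j i - v j i₀' := by simp only [ha, if_pos h1]
              rw [haz] at h3
              simp only [Pi.zero_apply] at h3
              rw [if_pos h2, mul_one]
              linarith [h3.symm]
            · by_cases h4 : i = i₀'
              · subst h4
                have hmem : i₀' ∈ S.map emb := Finset.mem_map_of_mem emb hi₀
                rw [if_pos hmem, mul_one]
              · have h3 : a i = v j i := by simp only [ha, if_neg h1, if_neg h4]
                rw [haz] at h3
                simp only [Pi.zero_apply] at h3
                have h5 : i ∉ S.map emb := by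
                  intro h
                  obtain ⟨i', hi', rfl⟩ := Finset.mem_map.1 h
                  by_cases h6 : i' = i₀
                  · exact h4 (h6 ▸ rfl)
                  · exact h1 (Finset.mem_map_of_mem emb (Finset.mem_erase.2 ⟨h6, hi'⟩))
                rw [if_neg h5, mul_zero, ← h3]
          have hc0 : v j i₀' ≠ 0 := by
            intro hc
            apply h0
            funext i
            rw [hfold i, hc, zero_mul]
            simp
          by_cases hb : v j i₀' + dd j = 0
          · exact (hno j (v j i₀') hc0 hfold (by linarith)).elim
          · have : W j = ∅ := by
              apply Set.eq_empty_iff_forall_notMem.2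
              intro y hy
              have h1 := hy.2
              rw [key y] at h1
              rw [haz] at h1
              simp only [Pi.zero_apply, zero_mul, Finset.sum_const_zero, zero_add] at h1
              exact hb (by linarith)
            simp [this]
        · have hsub : W j ⊆ {y | ∑ i, a i * y i = -(v j i₀' + dd j)} := by
            intro y hy
            have h1 := hy.2
            rw [key y] at h1
            show ∑ i, a i * y i = -(v j i₀' + dd j)
            linarith
          exact MeasureTheory.measure_mono_null hsub (null_hyperplane a haz _)
    have hZ : MeasureTheory.volume (⋃ j, W j) = 0 :=
      MeasureTheory.measure_iUnion_null hWnull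
    have hUpos : 0 < MeasureTheory.volume U :=
      hUopen.measure_pos MeasureTheory.volume ⟨y₀, hy₀U⟩
    have hnotsub : ¬ U ⊆ ⋃ j, W j := fun hsub =>
      hUpos.ne' (MeasureTheory.measure_mono_null hsub hZ)
    obtain ⟨y, hyU, hyW⟩ := Set.not_subset.1 hnotsub
    obtain ⟨j, hj0, hjz⟩ := lemA S hS (ψ y) hyU.1 hyU.2 (hψsum y)
    exact hyW (Set.mem_iUnion.2 ⟨j, hj0, hjz⟩)
  -- counting
  have hS0ne : ({⟨0, lt_trans Nat.zero_lt_one hn⟩} : Finset (Fin n)).Nonempty :=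
    Finset.singleton_nonempty _
  set jf : Finset (Fin n) → Fin m := fun S =>
    if h : S.Nonempty then (lemB S h).choose else (lemB _ hS0ne).choose with hjf
  have hjspec : ∀ S : Finset (Fin n), (h : S.Nonempty) → ∃ c : ℝ, c ≠ 0 ∧
      (∀ i : Fin d, v (jf S) i = c * (if i ∈ S.map emb then 1 else 0)) ∧ dd (jf S) = -c := by
    intro S h
    rw [hjf]
    simp only [dif_pos h]
    exact (lemB S h).choose_spec
  set 𝒮 : Finset (Finset (Fin n)) := Finset.univ.erase ∅ with h𝒮
  have hinj : Set.InjOn jf 𝒮 := by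
    intro S hSm T hTm heq
    have hSne : S.Nonempty := Finset.nonempty_iff_ne_empty.2 (Finset.mem_erase.1 hSm).1
    have hTne : T.Nonempty := Finset.nonempty_iff_ne_empty.2 (Finset.mem_erase.1 hTm).1
    obtain ⟨c, hc0, hvc, hdc⟩ := hjspec S hSne
    obtain ⟨c', hc0', hvc', hdc'⟩ := hjspec T hTne
    rw [heq] at hvc hdc
    have hcc : c = c' := by
      have := hdc.symm.trans hdc'
      linarith
    subst hcc
    apply Finset.ext
    intro i
    have hvi := (hvc (Fin.castLE hd i)).symm.trans (hvc' (Fin.castLE hd i))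
    have hmemS : Fin.castLE hd i ∈ S.map emb ↔ i ∈ S := Finset.mem_map' emb
    have hmemT : Fin.castLE hd i ∈ T.map emb ↔ i ∈ T := Finset.mem_map' emb
    constructor
    · intro hi
      rw [if_pos (hmemS.2 hi)] at hvi
      by_contra hni
      rw [if_neg (fun h => hni (hmemT.1 h))] at hvi
      simp at hvi
      exact hc0 hvi
    · intro hi
      rw [if_pos (hmemT.2 hi)] at hvi
      by_contra hni
      rw [if_neg (fun h => hni (hmemS.1 h))] at hvi
      simp at hvi
      exact hc0 hvi.symm
  have hcard : 𝒮.card ≤ m := by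
    have h1 := Finset.card_le_card_of_injOn jf (fun _ _ => Finset.mem_univ _) hinj
    simpa using h1
  have hcard𝒮 : 𝒮.card = 2 ^ n - 1 := by
    rw [h𝒮, Finset.card_erase_of_mem (Finset.mem_univ _), Finset.card_univ]
    simp [Fintype.card_finset]
  have h2n : 2 ≤ 2 ^ n := by
    calc 2 = 2 ^ 1 := by norm_num
    _ ≤ 2 ^ n := Nat.pow_le_pow_right (by norm_num) hn.le
  omega
end
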